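/- Let A be a complex n×n matrix with n ≥ 2. Then A is a sum of finitely many matrices each of finite order if and only if there exist m ≥ 1, pairwise distinct even positive integers β_1, …, β_m, pairwise distinct complex numbers ω_1, …, ω_m with ω_i^{β_i} = 1 for each i, polynomials F_1, …, F_m with positive integer coefficients satisfying 1 ≤ deg(F_i) ≤ β_i − 1, and a positive integer a_0, such that tr(A) = a_0 + F_1(ω_1) + … + F_m(ω_m). -/

import Mathlib

open Polynomial Matrix Complex

variable {n : ℕ}




/-- A matrix is a sum of finitely many finite-order matrices. -/
def SFO {n : ℕ} (A : Matrix (Fin n) (Fin n) ℂ) : Prop :=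
  ∃ (N : ℕ) (B : Fin N → Matrix (Fin n) (Fin n) ℂ),
    (∀ i, ∃ k : ℕ, 0 < k ∧ B i ^ k = 1) ∧ A = ∑ i, B i

lemma sfo_zero : SFO (0 : Matrix (Fin n) (Fin n) ℂ) :=
  ⟨0, fun _ => 0, fun i => i.elim0, by simp⟩

lemma sfo_of_finOrd {B : Matrix (Fin n) (Fin n) ℂ} {k : ℕ} (hk : 0 < k) (h : B ^ k = 1) :
    SFO B := ⟨1, fun _ => B, fun _ => ⟨k, hk, h⟩, by simp⟩

lemma sfo_add {A B : Matrix (Fin n) (Fin n) ℂ} (hA : SFO A) (hB : SFO B) : SFO (A + B) := by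
  obtain ⟨N1, B1, h1, rfl⟩ := hA
  obtain ⟨N2, B2, h2, rfl⟩ := hB
  refine ⟨N1 + N2, Fin.addCases B1 B2, fun i => ?_, ?_⟩
  · refine Fin.addCases (fun i => ?_) (fun i => ?_) i
    · simpa using h1 i
    · simpa using h2 i
  · rw [Fin.sum_univ_add]
    simp

lemma mconjPow {F G B : Matrix (Fin n) (Fin n) ℂ} (hFG : F * G = 1) (k : ℕ) :
    (F * B * G) ^ k = F * B ^ k * G := by
  have hGF : G * F = 1 := mul_eq_one_comm.mp hFG
  induction k with
  | zero => simp [hFG]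
  | succ k ih =>
      rw [pow_succ, ih, pow_succ]
      rw [Matrix.mul_assoc (F * B ^ k) G (F * B * G), ← Matrix.mul_assoc G (F * B) G,
        ← Matrix.mul_assoc G F B, hGF, Matrix.one_mul]
      noncomm_ring

lemma sfo_conj {F G A : Matrix (Fin n) (Fin n) ℂ} (hFG : F * G = 1) (hA : SFO A) :
    SFO (F * A * G) := by
  obtain ⟨N, B, h, rfl⟩ := hA
  refine ⟨N, fun i => F * B i * G, fun i => ?_, ?_⟩
  · obtain ⟨k, hk, hBk⟩ := h i
    exact ⟨k, hk, by rw [mconjPow hFG, hBk, Matrix.mul_one, hFG]⟩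
  · simp [Finset.mul_sum, Finset.sum_mul]

lemma finOrd_diagonal {v : Fin n → ℂ} (hv : ∀ i, ∃ k, 0 < k ∧ v i ^ k = 1) :
    ∃ K, 0 < K ∧ diagonal v ^ K = 1 := by
  choose k hk hvk using hv
  refine ⟨∏ i, k i, Finset.prod_pos (fun i _ => hk i), ?_⟩
  rw [Matrix.diagonal_pow]
  have : (v ^ ∏ i, k i) = fun _ => (1 : ℂ) := by
    funext i
    obtain ⟨c, hc⟩ := Finset.dvd_prod_of_mem k (Finset.mem_univ i)
    simp only [Pi.pow_apply]
    rw [hc, pow_mul, hvk i, one_pow]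
  rw [this]
  exact Matrix.diagonal_one


lemma prod_lin_eq_X_pow_sub_one {ζ : ℂ} (hζ : IsPrimitiveRoot ζ n) (hn : 0 < n) :
    ∏ i : Fin n, (X - C (ζ ^ (i : ℕ))) = X ^ n - 1 := by
  rw [X_pow_sub_one_eq_prod hn hζ]
  haveI : NeZero n := ⟨hn.ne'⟩
  refine Finset.prod_bij (fun (i : Fin n) _ => ζ ^ (i : ℕ)) ?_ ?_ ?_ ?_
  · intro i _
    rw [Polynomial.mem_nthRootsFinset hn, ← pow_mul, mul_comm, pow_mul, hζ.pow_eq_one, one_pow]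
  · intro i _ j _ h
    exact Fin.ext (hζ.pow_inj i.isLt j.isLt h)
  · intro μ hμ
    rw [Polynomial.mem_nthRootsFinset hn] at hμ
    obtain ⟨i, hi, rfl⟩ := hζ.eq_pow_of_pow_eq_one hμ
    exact ⟨⟨i, hi⟩, Finset.mem_univ _, rfl⟩
  · intros; rfl

lemma pow_eq_one_of_upperTri {ζ : ℂ} (hζ : IsPrimitiveRoot ζ n) (hn : 0 < n)
    {M : Matrix (Fin n) (Fin n) ℂ} (hM : M.BlockTriangular id)
    (hd : ∀ i : Fin n, M i i = ζ ^ (i : ℕ)) : M ^ n = 1 := by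
  have hcp : M.charpoly = X ^ n - 1 := by
    rw [Matrix.charpoly_of_upperTriangular M hM, ← prod_lin_eq_X_pow_sub_one hζ hn]
    exact Finset.prod_congr rfl fun i _ => by rw [hd i]
  have h2 := M.aeval_self_charpoly
  rw [hcp, map_sub, aeval_X_pow, Polynomial.aeval_one, sub_eq_zero] at h2
  exact h2



section tri

noncomputable def zeta (n : ℕ) : ℂ := Complex.exp (2 * Real.pi * Complex.I / n)

lemma zeta_prim (hn : 0 < n) : IsPrimitiveRoot (zeta n) n :=
  Complex.isPrimitiveRoot_exp n hn.ne'

noncomputable def Sdiag (n : ℕ) : Matrix (Fin n) (Fin n) ℂ :=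
  diagonal fun i : Fin n => zeta n ^ (i : ℕ)

lemma sfo_neg_Sdiag (hn : 0 < n) : SFO (-(Sdiag n)) := by
  have h : (-(Sdiag n)) ^ (2 * n) = 1 := by
    rw [Even.neg_pow (even_two_mul n), Sdiag, Matrix.diagonal_pow]
    have : (fun i : Fin n => zeta n ^ (i : ℕ)) ^ (2 * n) = fun _ => (1 : ℂ) := by
      funext i
      simp only [Pi.pow_apply]
      rw [← pow_mul, show (i : ℕ) * (2 * n) = n * (2 * (i : ℕ)) by ring, pow_mul,
        (zeta_prim hn).pow_eq_one, one_pow]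
    rw [this, Matrix.diagonal_one]
  exact sfo_of_finOrd (by positivity) h

lemma sfo_strictUpper {U : Matrix (Fin n) (Fin n) ℂ} (hn : 0 < n)
    (hU : ∀ i j : Fin n, j ≤ i → U i j = 0) : SFO U := by
  have key : (U + Sdiag n) ^ n = 1 := by
    apply pow_eq_one_of_upperTri (zeta_prim hn) hn
    · intro i j hij
      have hij' : j < i := hij
      simp only [Matrix.add_apply, Sdiag]
      rw [hU i j (le_of_lt hij'), diagonal_apply_ne _ (ne_of_gt hij'), add_zero]
    · intro i
      simp [Sdiag, hU i i le_rfl]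
  have : U = (U + Sdiag n) + (-(Sdiag n)) := by abel
  rw [this]
  exact sfo_add (sfo_of_finOrd hn key) (sfo_neg_Sdiag hn)

lemma sfo_strictLower {L : Matrix (Fin n) (Fin n) ℂ} (hn : 0 < n)
    (hL : ∀ i j : Fin n, i ≤ j → L i j = 0) : SFO L := by
  have key : ((L + Sdiag n)ᵀ) ^ n = 1 := by
    apply pow_eq_one_of_upperTri (zeta_prim hn) hn
    · intro i j hij
      have hij' : j < i := hij
      simp only [Matrix.transpose_apply, Matrix.add_apply, Sdiag]
      rw [hL j i (le_of_lt hij'), diagonal_apply_ne _ (ne_of_lt hij'), add_zero]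
    · intro i
      simp [Sdiag, hL i i le_rfl]
  have key2 : (L + Sdiag n) ^ n = 1 := by
    have := congrArg Matrix.transpose key
    rwa [← Matrix.transpose_pow, Matrix.transpose_transpose, Matrix.transpose_one] at this
  have : L = (L + Sdiag n) + (-(Sdiag n)) := by abel
  rw [this]
  exact sfo_add (sfo_of_finOrd hn key2) (sfo_neg_Sdiag hn)
end tri



/-- Any matrix with zero diagonal is SFO. -/
lemma sfo_zeroDiag {M : Matrix (Fin n) (Fin n) ℂ} (hn : 0 < n)
    (h : ∀ i, M i i = 0) : SFO M := by
  have hM : M = (Matrix.of fun i j => if i < j then M i j else 0)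
      + (Matrix.of fun i j => if j < i then M i j else 0) := by
    ext i j
    rcases lt_trichotomy i j with hij | rfl | hij
    · simp [hij, not_lt_of_gt hij]
    · simp [h i, lt_irrefl]
    · simp [hij, not_lt_of_gt hij]
  rw [hM]
  refine sfo_add (sfo_strictUpper hn ?_) (sfo_strictLower hn ?_)
  · intro i j hij; simp [Matrix.of_apply, not_lt_of_ge hij]
  · intro i j hij; simp [Matrix.of_apply, not_lt_of_ge hij]

noncomputable def Fdft (n : ℕ) : Matrix (Fin n) (Fin n) ℂ :=
  Matrix.of fun i j : Fin n => zeta n ^ ((i : ℕ) * (j : ℕ))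

noncomputable def Gdft (n : ℕ) : Matrix (Fin n) (Fin n) ℂ :=
  Matrix.of fun i j : Fin n => (n : ℂ)⁻¹ * (zeta n)⁻¹ ^ ((i : ℕ) * (j : ℕ))

lemma zeta_ne_zero (hn : 0 < n) : zeta n ≠ 0 := by
  intro h
  have := (zeta_prim hn).pow_eq_one
  rw [h, zero_pow hn.ne'] at this
  exact zero_ne_one this

lemma fdft_mul_gdft (hn : 0 < n) : Fdft n * Gdft n = 1 := by
  ext i k
  have hz := zeta_ne_zero hn
  have hmul : zeta n * (zeta n)⁻¹ = 1 := mul_inv_cancel₀ hz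
  simp only [Fdft, Gdft, Matrix.mul_apply, Matrix.of_apply, Matrix.one_apply]
  have key : ∀ j : Fin n, zeta n ^ ((i : ℕ) * (j : ℕ)) * ((n : ℂ)⁻¹ * (zeta n)⁻¹ ^ ((j : ℕ) * (k : ℕ)))
      = (n : ℂ)⁻¹ * (zeta n ^ (i : ℕ) * ((zeta n)⁻¹ ^ (k : ℕ))) ^ (j : ℕ) := by
    intro j
    rw [mul_pow, ← pow_mul, ← pow_mul, mul_comm ((j:ℕ)) ((k:ℕ)), mul_comm ((i:ℕ)) ((j:ℕ))]
    ring
  rw [Finset.sum_congr rfl fun j _ => key j, ← Finset.mul_sum]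
  set μ : ℂ := zeta n ^ (i : ℕ) * ((zeta n)⁻¹ ^ (k : ℕ)) with hμ
  by_cases hik : i = k
  · subst hik
    have : μ = 1 := by
      rw [hμ, ← mul_pow, hmul, one_pow]
    rw [this]
    simp [Finset.card_univ, Nat.cast_ne_zero.mpr hn.ne']
  · have hμne : μ ≠ 1 := by
      intro h1
      apply hik
      have h2 : zeta n ^ (i : ℕ) = zeta n ^ (k : ℕ) := by
        have h3 := congrArg (· * zeta n ^ (k : ℕ)) h1
        simpa [hμ, mul_assoc, inv_pow, inv_mul_cancel₀ (pow_ne_zero _ hz)] using h3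
      exact Fin.ext ((zeta_prim hn).pow_inj i.isLt k.isLt h2)
    have hμn : μ ^ n = 1 := by
      rw [hμ, mul_pow, ← pow_mul, ← pow_mul, mul_comm (i:ℕ) n, mul_comm (k:ℕ) n, pow_mul, pow_mul,
        (zeta_prim hn).pow_eq_one, inv_pow, (zeta_prim hn).pow_eq_one, inv_one, one_pow, one_pow, one_mul]
    have : ∑ j : Fin n, μ ^ (j : ℕ) = 0 := by
      rw [Fin.sum_univ_eq_sum_range (fun l => μ ^ l) n, geom_sum_eq hμne, hμn, sub_self, zero_div]
    rw [this, mul_zero, if_neg hik]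

lemma gdft_mul_fdft (hn : 0 < n) : Gdft n * Fdft n = 1 :=
  mul_eq_one_comm.mp (fdft_mul_gdft hn)

/-- diagonal matrix with zero trace is SFO -/
lemma sfo_diagonal_traceZero {d : Fin n → ℂ} (hn : 0 < n) (hd : ∑ i, d i = 0) :
    SFO (diagonal d) := by
  set M := Gdft n * diagonal d * Fdft n with hM
  have hdiag : ∀ i, M i i = 0 := by
    intro i
    rw [hM, Matrix.mul_apply]
    have : ∀ j, (Gdft n * diagonal d) i j * Fdft n j i
        = (n : ℂ)⁻¹ * d j := by
      intro j
      have hz : zeta n ^ ((i:ℕ) * (j:ℕ)) ≠ 0 := pow_ne_zero _ (zeta_ne_zero hn)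
      rw [Matrix.mul_diagonal, Fdft, Gdft, Matrix.of_apply, Matrix.of_apply, inv_pow,
        mul_comm (j : ℕ) (i : ℕ)]
      field_simp
    rw [Finset.sum_congr rfl fun j _ => this j, ← Finset.mul_sum, hd, mul_zero]
  have hsfoM : SFO M := sfo_zeroDiag hn hdiag
  have heq : Fdft n * M * Gdft n = diagonal d := by
    rw [hM]
    calc Fdft n * (Gdft n * diagonal d * Fdft n) * Gdft n
        = Fdft n * Gdft n * diagonal d * (Fdft n * Gdft n) := by noncomm_ring
      _ = diagonal d := by rw [fdft_mul_gdft hn, Matrix.one_mul, Matrix.mul_one]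
  rw [← heq]
  exact sfo_conj (fdft_mul_gdft hn) hsfoM

/-- any trace-zero matrix is SFO -/
lemma sfo_traceZero {R : Matrix (Fin n) (Fin n) ℂ} (hn : 0 < n) (hR : R.trace = 0) : SFO R := by
  have hsplit : R = (Matrix.of fun i j => if i = j then (0:ℂ) else R i j)
      + diagonal (fun i => R i i) := by
    ext i j
    by_cases h : i = j
    · subst h; simp
    · simp [h, diagonal_apply_ne _ h]
  rw [hsplit]
  refine sfo_add (sfo_zeroDiag hn (by simp)) (sfo_diagonal_traceZero hn ?_)
  simpa [Matrix.trace] using hR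



def IsRootOfU (z : ℂ) : Prop := ∃ k, 0 < k ∧ z ^ k = 1

def SRU (t : ℂ) : Prop := ∃ s : Multiset ℂ, (∀ x ∈ s, IsRootOfU x) ∧ s.sum = t

lemma sru_zero : SRU 0 := ⟨0, by simp, by simp⟩

lemma sru_add {a b : ℂ} (ha : SRU a) (hb : SRU b) : SRU (a + b) := by
  obtain ⟨s, hs, rfl⟩ := ha
  obtain ⟨t, ht, rfl⟩ := hb
  exact ⟨s + t, fun x hx => ((Multiset.mem_add).mp hx).elim (hs x) (ht x), by simp⟩

lemma sru_of_root {z : ℂ} (hz : IsRootOfU z) : SRU z := ⟨{z}, by simpa, by simp⟩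

lemma sru_nsmul {z : ℂ} (hz : IsRootOfU z) (c : ℕ) : SRU ((c : ℂ) * z) := by
  refine ⟨Multiset.replicate c z, fun x hx => ?_, ?_⟩
  · rw [Multiset.eq_of_mem_replicate hx]; exact hz
  · rw [Multiset.sum_replicate, nsmul_eq_mul]

lemma sru_nat (c : ℕ) : SRU (c : ℂ) := by
  simpa using sru_nsmul ⟨1, one_pos, one_pow 1⟩ c

lemma sru_sum {ι : Type*} (s : Finset ι) (f : ι → ℂ) (h : ∀ i ∈ s, SRU (f i)) :
    SRU (∑ i ∈ s, f i) := by
  classical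
  induction s using Finset.induction with
  | empty => simpa using sru_zero
  | insert _ _ hx ih =>
      rw [Finset.sum_insert hx]
      exact sru_add (h _ (Finset.mem_insert_self _ _))
        (ih fun i hi => h i (Finset.mem_insert_of_mem hi))

/-- a matrix with trace a given root of unity -/
lemma sfo_trace_root (hn : 2 ≤ n) {ζ : ℂ} (hζ : IsRootOfU ζ) :
    ∃ M : Matrix (Fin n) (Fin n) ℂ, SFO M ∧ M.trace = ζ := by
  have hn0 : 0 < n := by omega
  set ω : ℂ := Complex.exp (2 * Real.pi * Complex.I / 3) with hω
  have hω3 : ω ^ 3 = 1 := by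
    rw [hω, ← Complex.exp_nat_mul]
    rw [show ((3:ℕ) : ℂ) * (2 * Real.pi * Complex.I / 3) = 2 * Real.pi * Complex.I by
      push_cast; ring]
    exact Complex.exp_two_pi_mul_I
  have hωprim : IsPrimitiveRoot ω 3 := Complex.isPrimitiveRoot_exp 3 (by norm_num)
  have hsum3 : (1 : ℂ) + ω + ω ^ 2 = 0 := by
    have h3 := hωprim.geom_sum_eq_zero (by norm_num)
    calc (1:ℂ) + ω + ω ^ 2 = ∑ j ∈ Finset.range 3, ω ^ j := by
          rw [Finset.sum_range_succ, Finset.sum_range_succ, Finset.sum_range_one]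
          ring
      _ = 0 := h3
  set w1 : Fin n → ℂ :=
    fun i => if (i:ℕ) = 0 then ζ else if (i:ℕ) = 1 then ω else (-1) ^ (i:ℕ) with hw1
  set w2 : Fin n → ℂ :=
    fun i => if (i:ℕ) = 0 then ω ^ 2 else if (i:ℕ) = 1 then 1 else -((-1) ^ (i:ℕ)) with hw2
  have h1 : ∀ i, ∃ k, 0 < k ∧ w1 i ^ k = 1 := by
    intro i
    rw [hw1]
    by_cases hj0 : (i:ℕ) = 0
    · simpa [hj0, IsRootOfU] using hζ
    · by_cases hj1 : (i:ℕ) = 1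
      · exact ⟨3, by norm_num, by simp [hj0, hj1, hω3]⟩
      · refine ⟨2, by norm_num, ?_⟩
        simp only [hj0, hj1, if_false]
        rw [← pow_mul, mul_comm (i:ℕ) 2, pow_mul, neg_one_sq, one_pow]
  have h2 : ∀ i, ∃ k, 0 < k ∧ w2 i ^ k = 1 := by
    intro i
    rw [hw2]
    by_cases hj0 : (i:ℕ) = 0
    · refine ⟨3, by norm_num, ?_⟩
      simp only [hj0, if_true, if_pos rfl]
      rw [← pow_mul, show 2 * 3 = 3 * 2 from rfl, pow_mul, hω3, one_pow]
    · by_cases hj1 : (i:ℕ) = 1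
      · exact ⟨1, by norm_num, by simp [hj0, hj1]⟩
      · refine ⟨2, by norm_num, ?_⟩
        simp only [hj0, hj1, if_false]
        rw [neg_sq, ← pow_mul, mul_comm (i:ℕ) 2, pow_mul, neg_one_sq, one_pow]
  obtain ⟨K1, hK1, hB1⟩ := finOrd_diagonal h1
  obtain ⟨K2, hK2, hB2⟩ := finOrd_diagonal h2
  have htr : (diagonal w1).trace + (diagonal w2).trace = ζ := by
    rw [Matrix.trace_diagonal, Matrix.trace_diagonal, ← Finset.sum_add_distrib]
    have hpt : ∀ i : Fin n, w1 i + w2 i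
        = (if (i:ℕ) = 0 then ζ + ω ^ 2 else 0) + (if (i:ℕ) = 1 then ω + 1 else 0) := by
      intro i
      rw [hw1, hw2]
      by_cases hj0 : (i:ℕ) = 0
      · have hj1 : (i:ℕ) ≠ 1 := by omega
        simp [hj0, hj1]
      · by_cases hj1 : (i:ℕ) = 1
        · simp [hj0, hj1]
        · simp [hj0, hj1]
    rw [Finset.sum_congr rfl fun i _ => hpt i, Finset.sum_add_distrib]
    have conv0 : ∀ (c : ℂ) (m : ℕ) (hm : m < n),
        ∑ i : Fin n, (if (i:ℕ) = m then c else 0) = c := by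
      intro c m hm
      have hrw : ∀ i : Fin n, (if (i:ℕ) = m then c else 0)
          = if i = (⟨m, hm⟩ : Fin n) then c else 0 := by
        intro i
        congr 1
        simp [Fin.ext_iff]
      rw [Finset.sum_congr rfl fun i _ => hrw i]
      simp
    rw [conv0 _ 0 (by omega), conv0 _ 1 (by omega)]
    linear_combination hsum3
  refine ⟨diagonal w1 + diagonal w2, sfo_add (sfo_of_finOrd hK1 hB1) (sfo_of_finOrd hK2 hB2), ?_⟩
  rw [Matrix.trace_add, htr]

/-- main reverse lemma -/
lemma sfo_of_sru_trace (hn : 2 ≤ n) {A : Matrix (Fin n) (Fin n) ℂ} (h : SRU A.trace) :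
    SFO A := by
  have hn0 : 0 < n := by omega
  obtain ⟨s, hs, hsum⟩ := h
  -- build M with SFO M and trace M = s.sum
  have key : ∀ s : Multiset ℂ, (∀ x ∈ s, IsRootOfU x) →
      ∃ M : Matrix (Fin n) (Fin n) ℂ, SFO M ∧ M.trace = s.sum := by
    intro s
    induction s using Multiset.induction with
    | empty => exact fun _ => ⟨0, sfo_zero, by simp⟩
    | cons a t ih =>
        intro hmem
        obtain ⟨M1, hM1, htr1⟩ := sfo_trace_root hn (hmem a (Multiset.mem_cons_self a t))
        obtain ⟨M2, hM2, htr2⟩ := ih fun x hx => hmem x (Multiset.mem_cons_of_mem hx)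
        exact ⟨M1 + M2, sfo_add hM1 hM2, by rw [Matrix.trace_add, htr1, htr2, Multiset.sum_cons]⟩
  obtain ⟨M, hM, htrM⟩ := key s hs
  have : A = M + (A - M) := by abel
  rw [this]
  refine sfo_add hM (sfo_traceZero hn0 ?_)
  rw [Matrix.trace_sub, htrM, hsum, sub_self]



/-- roots of the charpoly of a finite-order matrix are roots of unity -/
lemma root_of_charpoly_isRootOfU {B : Matrix (Fin n) (Fin n) ℂ} {k : ℕ} (hk : 0 < k)
    (hB : B ^ k = 1) {x : ℂ} (hx : x ∈ B.charpoly.roots) : IsRootOfU x := by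
  have hroot : B.charpoly.IsRoot x := (Polynomial.mem_roots'.mp hx).2
  -- eval of charpoly is det (x • 1 - B)
  have hdet : (Matrix.scalar (Fin n) x - B).det = 0 := by
    have hmap : B.charmatrix.map (Polynomial.evalRingHom x) = Matrix.scalar (Fin n) x - B := by
      ext i j
      by_cases h : i = j
      · subst h; simp [Matrix.charmatrix_apply_eq, Matrix.scalar_apply]
      · simp [Matrix.charmatrix_apply_ne _ _ _ h, Matrix.scalar_apply,
          Matrix.diagonal_apply_ne _ h, Matrix.sub_apply]
    have hdm := (Polynomial.evalRingHom x).map_det B.charmatrix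
    rw [RingHom.mapMatrix_apply, hmap] at hdm
    rw [← hdm]
    simpa [Matrix.charpoly] using hroot
  obtain ⟨v, hv, hveq⟩ := (Matrix.exists_mulVec_eq_zero_iff).mpr hdet
  have hBv : B.mulVec v = x • v := by
    have h1 : (Matrix.scalar (Fin n) x - B).mulVec v = 0 := hveq
    rw [Matrix.sub_mulVec] at h1
    have h2 : (Matrix.scalar (Fin n) x).mulVec v = x • v := by
      funext i
      rw [Matrix.scalar_apply, Matrix.mulVec_diagonal]
      simp [mul_comm]
    rw [h2] at h1
    exact (sub_eq_zero.mp h1).symm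
  have hpow : ∀ m : ℕ, (B ^ m).mulVec v = x ^ m • v := by
    intro m
    induction m with
    | zero => simp [Matrix.one_mulVec]
    | succ m ih =>
        rw [pow_succ, ← Matrix.mulVec_mulVec, hBv, Matrix.mulVec_smul, ih, smul_smul, pow_succ,
          mul_comm]
  have hone := hpow k
  rw [hB, Matrix.one_mulVec] at hone
  obtain ⟨i, hi⟩ := Function.ne_iff.mp hv
  have hvi : v i = (x ^ k) * v i := by
    conv_lhs => rw [hone]
    simp
  have h0 : (x ^ k - 1) * v i = 0 := by linear_combination -hvi
  rcases mul_eq_zero.mp h0 with h | h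
  · exact ⟨k, hk, sub_eq_zero.mp h⟩
  · exact absurd h hi

lemma sru_trace_of_finOrd {B : Matrix (Fin n) (Fin n) ℂ} {k : ℕ} (hk : 0 < k)
    (hB : B ^ k = 1) : SRU B.trace := by
  refine ⟨B.charpoly.roots, fun x hx => root_of_charpoly_isRootOfU hk hB hx, ?_⟩
  exact (Matrix.trace_eq_sum_roots_charpoly B).symm


/-- common exponent for a multiset of roots of unity -/
lemma exists_common_exp (s : Multiset ℂ) (hs : ∀ x ∈ s, IsRootOfU x) :
    ∃ K, 0 < K ∧ ∀ x ∈ s, x ^ K = 1 := by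
  induction s using Multiset.induction with
  | empty => exact ⟨1, one_pos, by simp⟩
  | cons a t ih =>
      obtain ⟨K, hK, hKt⟩ := ih fun x hx => hs x (Multiset.mem_cons_of_mem hx)
      obtain ⟨k, hk, hak⟩ := hs a (Multiset.mem_cons_self a t)
      refine ⟨k * K, Nat.mul_pos hk hK, fun x hx => ?_⟩
      rcases Multiset.mem_cons.mp hx with rfl | hx
      · rw [pow_mul, hak, one_pow]
      · rw [mul_comm k K, pow_mul, hKt x hx, one_pow]

/-- write a sum of powers of ω as nonneg-integer combination -/
lemma exists_coeffs (β : ℕ) (hβ : 0 < β) {ω : ℂ} (hω : IsPrimitiveRoot ω β)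
    (s : Multiset ℂ) (hs : ∀ x ∈ s, x ^ β = 1) :
    ∃ c : ℕ → ℕ, s.sum = ∑ j ∈ Finset.range β, (c j : ℂ) * ω ^ j := by
  haveI : NeZero β := ⟨hβ.ne'⟩
  induction s using Multiset.induction with
  | empty => exact ⟨fun _ => 0, by simp⟩
  | cons a t ih =>
      obtain ⟨c, hc⟩ := ih fun x hx => hs x (Multiset.mem_cons_of_mem hx)
      obtain ⟨e, he, rfl⟩ := hω.eq_pow_of_pow_eq_one (hs a (Multiset.mem_cons_self a t))
      refine ⟨Function.update c e (c e + 1), ?_⟩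
      rw [Multiset.sum_cons, hc]
      have hmem : e ∈ Finset.range β := Finset.mem_range.mpr he
      have hpt : ∀ j, ((Function.update c e (c e + 1) j : ℕ) : ℂ) * ω ^ j
          = (c j : ℂ) * ω ^ j + (if j = e then ω ^ e else 0) := by
        intro j
        rcases eq_or_ne j e with rfl | hne
        · rw [Function.update_self, if_pos rfl]
          push_cast
          ring
        · rw [Function.update_of_ne hne, if_neg hne, add_zero]
      rw [Finset.sum_congr rfl fun j _ => hpt j, Finset.sum_add_distrib,
        Finset.sum_ite_eq' (Finset.range β) e (fun _ => ω ^ e), if_pos hmem]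
      ring

/-- packaging: SRU t gives the canonical form -/
lemma package {t : ℂ} (h : SRU t) :
    ∃ (β : ℕ) (ω : ℂ) (P : Polynomial ℕ) (a₀ : ℕ),
      0 < β ∧ Even β ∧ ω ^ β = 1 ∧ 1 ≤ P.natDegree ∧ P.natDegree ≤ β - 1 ∧
      (∀ j ≤ P.natDegree, 0 < P.coeff j) ∧ 0 < a₀ ∧
      t = (a₀ : ℂ) + Polynomial.aeval ω P := by
  obtain ⟨s, hs, rfl⟩ := h
  obtain ⟨K, hK, hsK⟩ := exists_common_exp s hs
  set β := 2 * K with hβdef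
  have hβ : 0 < β := by positivity
  have hβ2 : 2 ≤ β := by omega
  set ω : ℂ := Complex.exp (2 * Real.pi * Complex.I / β) with hωdef
  have hω : IsPrimitiveRoot ω β := Complex.isPrimitiveRoot_exp β hβ.ne'
  have hgeom : ∑ j ∈ Finset.range β, ω ^ j = 0 := hω.geom_sum_eq_zero (by omega)
  obtain ⟨c, hc⟩ := exists_coeffs β hβ hω s
    (fun x hx => by rw [hβdef, mul_comm, pow_mul, hsK x hx, one_pow])
  -- coefficients of P
  set b : ℕ → ℕ := fun j => if j = 0 then 1 else c j + 2 with hb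
  set P : Polynomial ℕ := ∑ j ∈ Finset.range β, Polynomial.C (b j) * Polynomial.X ^ j with hP
  have hcoeff : ∀ l, P.coeff l = if l ∈ Finset.range β then b l else 0 := by
    intro l
    rw [hP, Polynomial.finset_sum_coeff]
    rw [Finset.sum_congr rfl fun j _ => Polynomial.coeff_C_mul_X_pow (b j) j l]
    exact Finset.sum_ite_eq (Finset.range β) l b
  have hdeg : P.natDegree = β - 1 := by
    apply le_antisymm
    · apply Polynomial.natDegree_le_iff_coeff_eq_zero.mpr
      intro m hm
      rw [hcoeff m, if_neg (by simp; omega)]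
    · apply Polynomial.le_natDegree_of_ne_zero
      rw [hcoeff (β - 1), if_pos (by simp; omega), hb]
      simp only [if_neg (by omega : ¬(β - 1 = 0))]
      omega
  have haeval : Polynomial.aeval ω P = ∑ j ∈ Finset.range β, (b j : ℂ) * ω ^ j := by
    rw [hP, map_sum]
    refine Finset.sum_congr rfl fun j _ => ?_
    rw [_root_.map_mul, _root_.map_pow, Polynomial.aeval_C, Polynomial.aeval_X,
      eq_natCast (algebraMap ℕ ℂ) (b j)]
  refine ⟨β, ω, P, c 0 + 1, hβ, ⟨K, by omega⟩, hω.pow_eq_one, by omega, by omega, ?_, by omega, ?_⟩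
  · intro j hj
    rw [hdeg] at hj
    rw [hcoeff j, if_pos (Finset.mem_range.mpr (by omega)), hb]
    by_cases h0 : j = 0 <;> simp [h0]
  · rw [haeval, hc]
    have hpt : ∀ j, (b j : ℂ) * ω ^ j
        = (c j : ℂ) * ω ^ j + 2 * ω ^ j + (if j = 0 then -(c 0 : ℂ) - 1 else 0) := by
      intro j
      rcases eq_or_ne j 0 with rfl | hne
      · simp only [hb, if_pos rfl]
        push_cast
        ring
      · simp only [hb, if_neg hne]
        push_cast
        ring
    rw [Finset.sum_congr rfl fun j _ => hpt j, Finset.sum_add_distrib, Finset.sum_add_distrib,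
      Finset.sum_ite_eq' (Finset.range β) 0 (fun _ => -(c 0 : ℂ) - 1),
      if_pos (Finset.mem_range.mpr (by omega)), ← Finset.mul_sum, hgeom]
    push_cast
    ring

theorem sum_of_finite_order_iff (n : ℕ) (hn : 2 ≤ n)
    (A : Matrix (Fin n) (Fin n) ℂ) :
    (∃ (N : ℕ) (B : Fin N → Matrix (Fin n) (Fin n) ℂ),
        (∀ i, ∃ k : ℕ, 0 < k ∧ B i ^ k = 1) ∧ A = ∑ i, B i) ↔
    (∃ (m : ℕ) (β : Fin m → ℕ) (ω : Fin m → ℂ) (P : Fin m → Polynomial ℕ) (a₀ : ℕ),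
        1 ≤ m ∧
        Function.Injective β ∧ (∀ i, 0 < β i ∧ Even (β i)) ∧
        Function.Injective ω ∧ (∀ i, ω i ^ β i = 1) ∧
        (∀ i, 1 ≤ (P i).natDegree ∧ (P i).natDegree ≤ β i - 1 ∧
          ∀ j ≤ (P i).natDegree, 0 < (P i).coeff j) ∧
        0 < a₀ ∧
        A.trace = a₀ + ∑ i, Polynomial.aeval (ω i) (P i)) := by
  constructor
  · rintro ⟨N, B, hB, rfl⟩
    have hsru : SRU (∑ i, B i).trace := by
      rw [Matrix.trace_sum]
      refine sru_sum _ _ fun i _ => ?_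
      obtain ⟨k, hk, hBk⟩ := hB i
      exact sru_trace_of_finOrd hk hBk
    obtain ⟨β, ω, P, a₀, hβpos, hβeven, hωβ, hdeg1, hdegβ, hcoeffpos, ha₀, heq⟩ := package hsru
    refine ⟨1, fun _ => β, fun _ => ω, fun _ => P, a₀, le_refl 1,
      Function.injective_of_subsingleton _, fun _ => ⟨hβpos, hβeven⟩,
      Function.injective_of_subsingleton _, fun _ => hωβ,
      fun _ => ⟨hdeg1, hdegβ, hcoeffpos⟩, ha₀, ?_⟩
    rw [Fin.sum_univ_one]
    exact heq
  · rintro ⟨m, β, ω, P, a₀, _, _, hβ, _, hωβ, hP, _, heq⟩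
    have hsru : SRU A.trace := by
      rw [heq]
      refine sru_add (sru_nat a₀) (sru_sum _ _ fun i _ => ?_)
      rw [Polynomial.aeval_eq_sum_range]
      refine sru_sum _ _ fun j _ => ?_
      have hroot : IsRootOfU (ω i ^ j) := by
        refine ⟨β i, (hβ i).1, ?_⟩
        rw [← pow_mul, mul_comm j (β i), pow_mul, hωβ i, one_pow]
      have : (P i).coeff j • ω i ^ j = ((P i).coeff j : ℂ) * ω i ^ j := by
        simp [nsmul_eq_mul]
      rw [this]
      exact sru_nsmul hroot _
    exact sfo_of_sru_trace hn hsru
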